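/- Let Σ(θ) = I_p + τa Σ_{m=1}^k θ_m B(m,k) for θ ∈ {0,1}^k, where B(m,k) has entries b_{ij} = 1 iff (i = m and m+1 ≤ j ≤ 2k) or (j = m and m+1 ≤ i ≤ 2k). Then for any θ ≠ θ′, ‖Σ(θ) − Σ(θ′)‖² ≥ H(θ, θ′) · τ² (k/2) a², where H is the Hamming distance and ‖·‖ the operator norm. (Proof: apply the difference matrix to the indicator vector v of indices in [k/2, k].) -/

import Mathlib

open Matrix

/-- The matrix `B(m,k)` (1-indexed): `b_{ij} = 1` iff (`i = m` and `m+1 ≤ j ≤ 2k`)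
or (`j = m` and `m+1 ≤ i ≤ 2k`). Here indices of `Fin p` are shifted by one. -/
def lowerBdMatrix (p k m : ℕ) : Matrix (Fin p) (Fin p) ℝ :=
  Matrix.of fun i j =>
    if ((i : ℕ) + 1 = m ∧ m + 1 ≤ (j : ℕ) + 1 ∧ (j : ℕ) + 1 ≤ 2 * k) ∨
       ((j : ℕ) + 1 = m ∧ m + 1 ≤ (i : ℕ) + 1 ∧ (i : ℕ) + 1 ≤ 2 * k)
    then 1 else 0

/-- For `Σ(θ) = I + τ a ∑_{m=1}^k θ_m B(m,k)` with `θ ∈ {0,1}^k` and `p ≥ 2k`: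
for `θ ≠ θ'`, `‖Σ(θ) - Σ(θ')‖² ≥ H(θ,θ') · τ² (k/2) a²` where `H` is the Hamming
distance and `‖·‖` the operator norm. -/
theorem lower_bound_operator_norm_separation (p k : ℕ) (hk : 0 < k) (hp : 2 * k ≤ p)
    (τ a : ℝ) (hτ : 0 < τ) (ha : 0 < a) (θ θ' : ℕ → Bool) (hθ : θ ≠ θ')
    (Sθ Sθ' : Matrix (Fin p) (Fin p) ℝ)
    (hS : Sθ = 1 + (τ * a) •
      ∑ m ∈ Finset.Icc 1 k, (if θ m then (1 : ℝ) else 0) • lowerBdMatrix p k m)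
    (hS' : Sθ' = 1 + (τ * a) •
      ∑ m ∈ Finset.Icc 1 k, (if θ' m then (1 : ℝ) else 0) • lowerBdMatrix p k m) :
    ‖Matrix.toEuclideanCLM (𝕜 := ℝ) (Sθ - Sθ')‖ ^ 2 ≥
      (((Finset.Icc 1 k).filter (fun m => θ m ≠ θ' m)).card : ℝ) *
        τ ^ 2 * ((k : ℝ) / 2) * a ^ 2 := by
  classical
  set H : ℝ := (((Finset.Icc 1 k).filter (fun m => θ m ≠ θ' m)).card : ℝ) with hH
  have hHnn : 0 ≤ H := by positivity
  set c : ℕ → ℝ := fun m => (if θ m then (1:ℝ) else 0) - (if θ' m then 1 else 0) with hc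
  have hD : Sθ - Sθ' = (τ*a) • ∑ m ∈ Finset.Icc 1 k, c m • lowerBdMatrix p k m := by
    subst hS hS'
    rw [add_sub_add_left_eq_sub, ← smul_sub, ← Finset.sum_sub_distrib]
    congr 1
    exact Finset.sum_congr rfl fun m _ => by rw [hc, sub_smul]
  set w : Fin p → ℝ := fun j => if k ≤ (j:ℕ) ∧ (j:ℕ) < 2*k then 1 else 0 with hw
  have hwsum : ∀ (g : ℝ), ∑ j : Fin p, (if k ≤ (j:ℕ) ∧ (j:ℕ) < 2*k then g else 0)
      = k * g := by
    intro g
    rw [Fin.sum_univ_eq_sum_range (fun j => if k ≤ j ∧ j < 2*k then g else 0) p]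
    have h1 : ∀ j ∈ Finset.range p, (if k ≤ j ∧ j < 2*k then g else 0)
        = if j ∈ Finset.Ico k (2*k) then g else 0 := by
      intro j _; simp [Finset.mem_Ico]
    rw [Finset.sum_congr rfl h1, Finset.sum_ite_mem]
    have h2 : Finset.range p ∩ Finset.Ico k (2*k) = Finset.Ico k (2*k) :=
      Finset.inter_eq_right.mpr fun x hx =>
        Finset.mem_range.mpr (lt_of_lt_of_le (Finset.mem_Ico.mp hx).2 hp)
    rw [h2, Finset.sum_const, Nat.card_Ico, nsmul_eq_mul]
    congr 1
    have : 2 * k - k = k := by omega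
    rw [this]
  have hBv : ∀ m ∈ Finset.Icc 1 k, ∀ i : Fin p,
      (lowerBdMatrix p k m *ᵥ w) i = if (i:ℕ) + 1 = m then (k:ℝ) else 0 := by
    intro m hm i
    obtain ⟨hm1, hm2⟩ := Finset.mem_Icc.mp hm
    simp only [Matrix.mulVec, dotProduct, lowerBdMatrix, Matrix.of_apply, hw]
    have key : ∀ j : Fin p,
        (if ((i : ℕ) + 1 = m ∧ m + 1 ≤ (j : ℕ) + 1 ∧ (j : ℕ) + 1 ≤ 2 * k) ∨
           ((j : ℕ) + 1 = m ∧ m + 1 ≤ (i : ℕ) + 1 ∧ (i : ℕ) + 1 ≤ 2 * k)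
         then (1:ℝ) else 0) * (if k ≤ (j:ℕ) ∧ (j:ℕ) < 2*k then 1 else 0)
        = if k ≤ (j:ℕ) ∧ (j:ℕ) < 2*k then (if (i:ℕ) + 1 = m then 1 else 0) else 0 := by
      intro j
      by_cases hj : k ≤ (j:ℕ) ∧ (j:ℕ) < 2*k
      · have hiff : (((i : ℕ) + 1 = m ∧ m + 1 ≤ (j : ℕ) + 1 ∧ (j : ℕ) + 1 ≤ 2 * k) ∨
           ((j : ℕ) + 1 = m ∧ m + 1 ≤ (i : ℕ) + 1 ∧ (i : ℕ) + 1 ≤ 2 * k)) ↔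
           ((i:ℕ) + 1 = m) := by omega
        rw [if_pos hj, if_pos hj, mul_one, if_congr hiff rfl rfl]
      · simp [hj]
    rw [Finset.sum_congr rfl fun j _ => key j, hwsum]
    by_cases hi : (i:ℕ) + 1 = m <;> simp [hi]
  have hDv : ∀ i : Fin p, ((Sθ - Sθ') *ᵥ w) i
      = if (i:ℕ) < k then τ*a*(k:ℝ) * c ((i:ℕ)+1) else 0 := by
    intro i
    rw [hD]
    have hswap : ((∑ m ∈ Finset.Icc 1 k, c m • lowerBdMatrix p k m) *ᵥ w) i
        = ∑ m ∈ Finset.Icc 1 k, c m * ((lowerBdMatrix p k m *ᵥ w) i) := by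
      simp only [Matrix.mulVec, dotProduct, Matrix.sum_apply, Matrix.smul_apply,
        smul_eq_mul, Finset.sum_mul, Finset.mul_sum, mul_assoc]
      rw [Finset.sum_comm]
    rw [Matrix.smul_mulVec, Pi.smul_apply, hswap, smul_eq_mul]
    have h1 : ∀ m ∈ Finset.Icc 1 k, c m * ((lowerBdMatrix p k m *ᵥ w) i)
        = if (i:ℕ) + 1 = m then c m * k else 0 := by
      intro m hm
      rw [hBv m hm i]
      by_cases hi : (i:ℕ) + 1 = m <;> simp [hi]
    rw [Finset.sum_congr rfl h1, Finset.sum_ite_eq]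
    by_cases hi : (i:ℕ) < k
    · have : (i:ℕ) + 1 ∈ Finset.Icc 1 k := by simp [Finset.mem_Icc]; omega
      rw [if_pos this, if_pos hi]; ring
    · have : (i:ℕ) + 1 ∉ Finset.Icc 1 k := by simp [Finset.mem_Icc]; omega
      rw [if_neg this, if_neg hi, mul_zero]
  set v : EuclideanSpace ℝ (Fin p) := (WithLp.equiv 2 _).symm w with hv
  have hnormv : ‖v‖^2 = (k:ℝ) := by
    rw [EuclideanSpace.norm_eq, Real.sq_sqrt (Finset.sum_nonneg fun i _ => by positivity)]
    have : ∀ i : Fin p, ‖v i‖^2 = if k ≤ (i:ℕ) ∧ (i:ℕ) < 2*k then (1:ℝ) else 0 := by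
      intro i
      show ‖w i‖^2 = _
      rw [hw]
      by_cases hi : k ≤ (i:ℕ) ∧ (i:ℕ) < 2*k <;> simp [hi]
    rw [Finset.sum_congr rfl fun i _ => this i, hwsum, mul_one]
  have hcsq : ∀ m, (c m)^2 = if θ m ≠ θ' m then (1:ℝ) else 0 := by
    intro m
    rw [hc]
    cases hθm : θ m <;> cases hθ'm : θ' m <;> simp [hθm, hθ'm] <;> norm_num
  have hnormDv : ‖(Matrix.toEuclideanCLM (𝕜 := ℝ) (Sθ - Sθ')) v‖^2 = H * (τ*a*(k:ℝ))^2 := by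
    rw [hv, show ∀ x : Fin p → ℝ, Matrix.toEuclideanCLM (𝕜 := ℝ) (Sθ - Sθ') ((WithLp.equiv 2 _).symm x)
        = (WithLp.equiv 2 _).symm (Matrix.toLin' (Sθ - Sθ') x) from fun x => rfl, EuclideanSpace.norm_eq,
      Real.sq_sqrt (Finset.sum_nonneg fun i _ => by positivity)]
    have hterm : ∀ i : Fin p, ‖(WithLp.equiv 2 _).symm (Matrix.toLin' (Sθ - Sθ') w) i‖^2
        = if (i:ℕ) < k then (τ*a*(k:ℝ))^2 * ((if θ ((i:ℕ)+1) ≠ θ' ((i:ℕ)+1) then (1:ℝ) else 0)) else 0 := by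
      intro i
      show ‖(Matrix.toLin' (Sθ - Sθ') w) i‖^2 = _
      rw [Matrix.toLin'_apply, hDv i]
      by_cases hi : (i:ℕ) < k
      · rw [if_pos hi, if_pos hi, Real.norm_eq_abs, sq_abs, mul_pow, hcsq]
      · simp [hi]
    rw [Finset.sum_congr rfl fun i _ => hterm i]
    rw [Fin.sum_univ_eq_sum_range
      (fun i => if i < k then (τ*a*(k:ℝ))^2 * ((if θ (i+1) ≠ θ' (i+1) then (1:ℝ) else 0)) else 0) p]
    have h1 : ∀ i ∈ Finset.range p,
        (if i < k then (τ*a*(k:ℝ))^2 * ((if θ (i+1) ≠ θ' (i+1) then (1:ℝ) else 0)) else 0)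
        = if i ∈ Finset.range k then (τ*a*(k:ℝ))^2 * ((if θ (i+1) ≠ θ' (i+1) then (1:ℝ) else 0)) else 0 := by
      intro i _; simp [Finset.mem_range]
    rw [Finset.sum_congr rfl h1, Finset.sum_ite_mem,
      Finset.inter_eq_right.mpr (Finset.range_subset_range.mpr (by omega))]
    rw [← Finset.mul_sum, hH]
    have h2 : ∑ i ∈ Finset.range k, (if θ (i+1) ≠ θ' (i+1) then (1:ℝ) else 0)
        = ∑ m ∈ Finset.Icc 1 k, (if θ m ≠ θ' m then (1:ℝ) else 0) := by
      rw [← Finset.Ico_add_one_right_eq_Icc, Finset.sum_Ico_eq_sum_range]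
      simp only [Nat.add_sub_cancel]
      exact Finset.sum_congr rfl fun i _ => by rw [Nat.add_comm 1 i]
    rw [h2, Finset.sum_boole]
    ring
  have hle := (Matrix.toEuclideanCLM (𝕜 := ℝ) (Sθ - Sθ')).le_opNorm v
  have hsq : ‖(Matrix.toEuclideanCLM (𝕜 := ℝ) (Sθ - Sθ')) v‖^2
      ≤ (‖Matrix.toEuclideanCLM (𝕜 := ℝ) (Sθ - Sθ')‖ * ‖v‖)^2 :=
    pow_le_pow_left₀ (norm_nonneg _) hle 2
  rw [hnormDv, mul_pow (‖Matrix.toEuclideanCLM (𝕜 := ℝ) (Sθ - Sθ')‖) ‖v‖ 2, hnormv] at hsq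
  have hk' : (0:ℝ) < k := by exact_mod_cast hk
  have hN : 0 ≤ ‖Matrix.toEuclideanCLM (𝕜 := ℝ) (Sθ - Sθ')‖ := norm_nonneg _
  rw [ge_iff_le]
  nlinarith [mul_nonneg (mul_nonneg (mul_nonneg hHnn (sq_nonneg τ)) (sq_nonneg a))
    (mul_pos hk' hk').le, mul_nonneg (mul_nonneg hHnn (sq_nonneg τ)) (sq_nonneg a)]
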